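/- Let P = (tn, fp, fn, tp) be a two-class classification performance with priors π₋ = tn + fp and π₊ = fn + tp both nonzero, and suppose tn + fn ≠ 0. Define TNR = tn/π₋, TPR = tp/π₊, and NPV = tn/(tn + fn). Then the standardized negative predictive value SNPV = TNR / (TNR + (1 − TPR)) satisfies SNPV = (NPV·(1/π₋)) / (NPV·(1/π₋) + (1 − NPV)·(1/π₊)); in particular, for fixed priors, SNPV is a strictly increasing function of NPV. -/

import Mathlib

/-- The standardized negative predictive value `SNPV = TNR/(TNR + (1 - TPR))`
is, for fixed priors, a strictly increasing function of the negative
predictive value `NPV`. -/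
theorem snpv_increasing_in_npv
    (tn fp fn tp : ℝ) (htn : 0 ≤ tn) (hfp : 0 ≤ fp) (hfn : 0 ≤ fn) (htp : 0 ≤ tp)
    (hsum : tn + fp + fn + tp = 1)
    (hpn : tn + fp ≠ 0) (hpp : fn + tp ≠ 0) (hnd : tn + fn ≠ 0) :
    (tn / (tn + fp)) / (tn / (tn + fp) + (1 - tp / (fn + tp))) =
        ((tn / (tn + fn)) * (1 / (tn + fp))) /
          ((tn / (tn + fn)) * (1 / (tn + fp)) +
            (1 - tn / (tn + fn)) * (1 / (fn + tp))) ∧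
      StrictMonoOn
        (fun x : ℝ => (x * (1 / (tn + fp))) /
          (x * (1 / (tn + fp)) + (1 - x) * (1 / (fn + tp))))
        (Set.Icc 0 1) := by
  have hpn' : 0 < tn + fp := lt_of_le_of_ne (by linarith) (Ne.symm hpn)
  have hpp' : 0 < fn + tp := lt_of_le_of_ne (by linarith) (Ne.symm hpp)
  have hnd' : 0 < tn + fn := lt_of_le_of_ne (by linarith) (Ne.symm hnd)
  set a := 1 / (tn + fp) with ha
  set b := 1 / (fn + tp) with hb
  have ha' : 0 < a := by positivity
  have hb' : 0 < b := by positivity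
  constructor
  · -- equality of the two expressions
    have h1 : 1 - tp / (fn + tp) = fn / (fn + tp) := by
      field_simp
      ring
    rw [h1]
    have hd1 : tn / (tn + fp) + fn / (fn + tp) ≠ 0 := by
      by_cases htn0 : tn = 0
      · have hfn0 : 0 < fn := by
          rcases lt_or_eq_of_le hfn with h | h
          · exact h
          · exact absurd (by linarith : tn + fn = 0) hnd
        have : 0 < tn / (tn + fp) + fn / (fn + tp) := by positivity
        exact ne_of_gt this
      · have htn' : 0 < tn := lt_of_le_of_ne htn (Ne.symm htn0)
        have : 0 < tn / (tn + fp) + fn / (fn + tp) := by positivity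
        exact ne_of_gt this
    have hd2 : (tn / (tn + fn)) * a + (1 - tn / (tn + fn)) * b ≠ 0 := by
      have he : (tn / (tn + fn)) * a + (1 - tn / (tn + fn)) * b =
          (tn / (tn + fp) + fn / (fn + tp)) / (tn + fn) := by
        rw [ha, hb]
        field_simp
        ring
      rw [he]
      exact div_ne_zero hd1 hnd
    rw [div_eq_div_iff hd1 hd2, ha, hb]
    field_simp
    ring
  · -- strict monotonicity
    intro x hx y hy hxy
    simp only [Set.mem_Icc] at hx hy
    have hdx : 0 < x * a + (1 - x) * b := by
      rcases lt_or_eq_of_le hx.1 with h | h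
      · have : 0 ≤ (1 - x) * b := mul_nonneg (by linarith [hx.2]) hb'.le
        nlinarith
      · rw [← h]; simpa using hb'
    have hdy : 0 < y * a + (1 - y) * b := by
      rcases lt_or_eq_of_le hy.1 with h | h
      · have : 0 ≤ (1 - y) * b := mul_nonneg (by linarith [hy.2]) hb'.le
        nlinarith
      · rw [← h]; simpa using hb'
    simp only
    rw [div_lt_div_iff₀ hdx hdy]
    nlinarith [mul_pos (mul_pos ha' hb') (sub_pos.mpr hxy)]
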